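/- Let F be a number field, let u ∈ 𝓞_F^× be a unit of infinite order, let l be an odd prime, and let m ≥ 1 be an integer. Then there exist infinitely many nonzero prime ideals v of 𝓞_F, not dividing l, such that l^m divides the multiplicative order of the image of u in the unit group k_v^× of the residue field k_v = 𝓞_F/v. (This is the cyclotomic instance of Proposition 2.19: the reduction of a nontorsion element has order at least a prescribed power of l at infinitely many primes.) -/

import Mathlib

set_option maxHeartbeats 4000000
set_option synthInstance.maxHeartbeats 1000000

open scoped NumberField
open IsDedekindDomain

/-- Simultaneous non-smallness: for finitely many points on the unit circle, none of which
is a root of unity, there are arbitrarily large exponents `j` for which all of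
`‖z i ^ j - 1‖` are uniformly bounded below. -/
lemma exists_good_exponent {ι : Type*} [Fintype ι] (z : ι → ℂ) (h1 : ∀ i, ‖z i‖ = 1)
    (h2 : ∀ i, ∀ n : ℕ, 0 < n → (z i) ^ n ≠ 1) :
    ∃ c > 0, ∀ N : ℕ, ∃ j, N ≤ j ∧ 0 < j ∧ ∀ i, c ≤ ‖(z i) ^ j - 1‖ := by
  classical
  rcases isEmpty_or_nonempty ι with hι | hι
  · exact ⟨1, one_pos, fun N => ⟨N + 1, Nat.le_succ N, N.succ_pos, fun i => (IsEmpty.false i).elim⟩⟩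
  set K := Fintype.card ι with hK
  set f : ι × ℕ → ℝ := fun p => ‖(z p.1) ^ p.2 - 1‖ with hf
  set T : Finset (ι × ℕ) := Finset.univ ×ˢ Finset.Icc 1 K with hT
  have hTne : T.Nonempty := ⟨⟨Classical.arbitrary ι, 1⟩,
    Finset.mem_product.mpr ⟨Finset.mem_univ _, Finset.mem_Icc.mpr ⟨le_refl 1, Fintype.card_pos⟩⟩⟩
  set c : ℝ := (T.inf' hTne f) / 2 with hc
  have hcpos : 0 < c := by
    apply div_pos _ two_pos
    rw [Finset.lt_inf'_iff]
    rintro ⟨i, g⟩ hp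
    have hg : 1 ≤ g := (Finset.mem_Icc.mp (Finset.mem_product.mp hp).2).1
    have h3 : (z i) ^ g - 1 ≠ 0 := sub_ne_zero.mpr (h2 i g hg)
    simpa [hf, norm_pos_iff] using h3
  have hcle : ∀ i, ∀ g, 1 ≤ g → g ≤ K → 2 * c ≤ ‖(z i) ^ g - 1‖ := by
    intro i g hg1 hg2
    have hmem : (⟨i, g⟩ : ι × ℕ) ∈ T :=
      Finset.mem_product.mpr ⟨Finset.mem_univ _, Finset.mem_Icc.mpr ⟨hg1, hg2⟩⟩
    have := Finset.inf'_le f hmem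
    rw [hc]; rw [hf] at this; simp only at this; linarith
  refine ⟨c, hcpos, fun N => ?_⟩
  by_contra hbad
  push_neg at hbad
  have hw : ∀ j ∈ Finset.Icc (N+1) (N+1+K), ∃ i, ‖(z i) ^ j - 1‖ < c := by
    intro j hj
    rcases Finset.mem_Icc.mp hj with ⟨hj1, _⟩
    obtain ⟨i, hi⟩ := hbad j (by omega) (by omega)
    exact ⟨i, hi⟩
  choose g hg using hw
  have hcard : (Finset.univ : Finset ι).card < (Finset.Icc (N+1) (N+1+K)).attach.card := by
    simp [Nat.card_Icc, hK]; omega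
  obtain ⟨a, _, b, _, hab, heq⟩ :=
    Finset.exists_ne_map_eq_of_card_lt_of_maps_to hcard
      (fun p _ => Finset.mem_univ (g p.1 p.2))
  rcases Finset.mem_Icc.mp a.2 with ⟨ha1, ha2⟩
  rcases Finset.mem_Icc.mp b.2 with ⟨hb1, hb2⟩
  have hne : (a : ℕ) ≠ (b : ℕ) := fun h => hab (Subtype.ext h)
  set i := g a.1 a.2
  have hia : ‖(z i) ^ (a : ℕ) - 1‖ < c := hg a.1 a.2
  have hib : ‖(z i) ^ (b : ℕ) - 1‖ < c := by rw [heq]; exact hg b.1 b.2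
  have key : ∀ p q : ℕ, p < q → q - p ≤ K →
      ‖(z i) ^ p - 1‖ < c → ‖(z i) ^ q - 1‖ < c → False := by
    intro p q hpq hle hp hq
    have h2c := hcle i (q - p) (by omega) hle
    have hzp : ‖(z i) ^ p‖ = 1 := by rw [norm_pow, h1 i, one_pow]
    have hfac : (z i) ^ q - (z i) ^ p = (z i) ^ p * ((z i) ^ (q - p) - 1) := by
      rw [mul_sub, mul_one, ← pow_add]
      congr 2
      omega
    have heqn : ‖(z i) ^ (q-p) - 1‖ = ‖(z i) ^ q - (z i) ^ p‖ := by
      rw [hfac, norm_mul, hzp, one_mul]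
    have htri : ‖(z i) ^ q - (z i) ^ p‖ ≤ ‖(z i) ^ q - 1‖ + ‖(z i) ^ p - 1‖ := by
      have := norm_sub_le ((z i) ^ q - 1) ((z i) ^ p - 1)
      simpa [sub_sub_sub_cancel_right] using this
    linarith
  rcases lt_or_gt_of_ne hne with h | h
  · exact key a b h (by omega) hia hib
  · exact key b a h (by omega) hib hia

/-- Elementary arithmetic: if `l ^ (m - 1) ∣ s` and `l` divides `d / gcd d s`
(the order of the `s`-th power), then `l ^ m ∣ d`. -/
lemma pow_dvd_of_prime_dvd_orderOf_pow {l m d s : ℕ} (hl : l.Prime) (hm : 1 ≤ m) (hd : d ≠ 0)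
    (hs : s ≠ 0) (hsm : l ^ (m - 1) ∣ s) (hr : l ∣ d / Nat.gcd d s) : l ^ m ∣ d := by
  have hg : Nat.gcd d s ∣ d := Nat.gcd_dvd_left d s
  have hgne : Nat.gcd d s ≠ 0 := Nat.gcd_ne_zero_left hd
  have hrne : d / Nat.gcd d s ≠ 0 :=
    (Nat.div_ne_zero_iff_of_dvd hg).mpr ⟨hd, hgne⟩
  set a := d.factorization l with ha
  set b := s.factorization l with hb
  have hbm : m - 1 ≤ b := (Nat.Prime.pow_dvd_iff_le_factorization hl hs).mp hsm
  have hfd : (d / Nat.gcd d s).factorization = d.factorization - (Nat.gcd d s).factorization :=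
    Nat.factorization_div hg
  have hfg : (Nat.gcd d s).factorization = d.factorization ⊓ s.factorization :=
    Nat.factorization_gcd hd hs
  have h1 : 1 ≤ (d / Nat.gcd d s).factorization l :=
    (Nat.Prime.pow_dvd_iff_le_factorization hl hrne).mp (by simpa using hr)
  rw [hfd, hfg] at h1
  simp only [Finsupp.tsub_apply, Finsupp.inf_apply] at h1
  have hlt : min a b < a := by omega
  have hba : b < a := by
    rcases le_or_gt a b with h | h
    · simp [min_eq_left h] at hlt
    · exact h
  exact (Nat.Prime.pow_dvd_iff_le_factorization hl hd).mpr (by omega)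

/-!
The cyclotomic instance of Proposition 2.19: for a unit `u` of infinite order in `𝓞_F`, an
odd prime `l` and `m ≥ 1`, there are infinitely many nonzero primes `v` of `𝓞_F`, not
dividing `l`, such that `l^m` divides the multiplicative order of the reduction of `u` in
the residue field `k_v = 𝓞_F/v`.
-/
theorem infinitely_many_primes_with_large_order_of_unit
    (F : Type*) [Field F] [NumberField F]
    (u : (𝓞 F)ˣ) (hu : ¬ IsOfFinOrder u)
    (l : ℕ) [Fact l.Prime] (hl : Odd l) (m : ℕ) (hm : 1 ≤ m) :
    {v : HeightOneSpectrum (𝓞 F) |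
      (l : 𝓞 F) ∉ v.asIdeal ∧
      l ^ m ∣ orderOf (Units.map (Ideal.Quotient.mk v.asIdeal).toMonoidHom u)}.Infinite := by
  classical
  have hp : l.Prime := Fact.out
  have hl2 : 2 ≤ l := hp.two_le
  have hl3 : 3 ≤ l := by
    have hne2 : l ≠ 2 := by
      intro h
      rw [h] at hl
      exact (by decide : ¬ Odd 2) hl
    omega
  by_contra hfin
  rw [Set.not_infinite] at hfin
  set T : Finset (HeightOneSpectrum (𝓞 F)) := hfin.toFinset with hTdef
  -- the auxiliary modulus
  set P : Ideal (𝓞 F) := ∏ v ∈ T, v.asIdeal with hPdef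
  have hPbot : P ≠ ⊥ := by
    refine Finset.prod_induction _ (· ≠ ⊥)
      (fun a b ha hb => by simp [Ideal.mul_eq_bot, ha, hb]) one_ne_zero (fun v _ => v.ne_bot)
  have hlO : (l : 𝓞 F) ≠ 0 := Nat.cast_ne_zero.mpr hp.ne_zero
  set Q : Ideal (𝓞 F) := Ideal.span {(l : 𝓞 F) ^ 2} * P with hQdef
  have hQbot : Q ≠ ⊥ := by
    have h1 : Ideal.span {(l : 𝓞 F) ^ 2} ≠ ⊥ := by
      simp [Ideal.span_singleton_eq_bot, pow_eq_zero_iff, hlO]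
    simp [hQdef, Ideal.mul_eq_bot, h1, hPbot]
  haveI hQfin : Fintype (𝓞 F ⧸ Q) := @Fintype.ofFinite _ (Ideal.finiteQuotientOfFreeOfNeBot Q hQbot)
  haveI hQufin : Finite ((𝓞 F ⧸ Q)ˣ) :=
    Finite.of_injective (fun x => (x : 𝓞 F ⧸ Q)) (fun _ _ h => Units.ext h)
  set t : ℕ := Nat.card ((𝓞 F ⧸ Q)ˣ) with htdef
  have ht0 : 0 < t := Nat.card_pos
  set s : ℕ := t * l ^ (m - 1) with hsdef
  have hs0 : s ≠ 0 := by positivity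
  set a : 𝓞 F := (u : 𝓞 F) ^ s with hadef
  -- the reduction of `a` mod `Q` is 1
  have hws : Units.map (Ideal.Quotient.mk Q).toMonoidHom (u ^ s) = 1 := by
    rw [map_pow, hsdef, pow_mul, pow_card_eq_one', one_pow]
  have haQ : Ideal.Quotient.mk Q a = 1 := by
    have := congrArg (fun x : ((𝓞 F ⧸ Q)ˣ) => (x : (𝓞 F ⧸ Q))) hws
    simpa [hadef] using this
  -- the cyclotomic values
  set y : ℕ → 𝓞 F := fun j => ∑ i ∈ Finset.range l, (a ^ j) ^ i with hydef
  have hident : ∀ j, y j * (a ^ j - 1) = a ^ (j * l) - 1 := by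
    intro j
    rw [hydef]
    simp only
    rw [geom_sum_mul, ← pow_mul]
  have hyne : ∀ j, 1 ≤ j → y j ≠ 0 := by
    intro j hj hy0
    have h1 : a ^ (j * l) - 1 = 0 := by rw [← hident j, hy0, zero_mul]
    have h2 : (u : 𝓞 F) ^ (s * (j * l)) = 1 := by
      rw [pow_mul, ← hadef]
      rw [sub_eq_zero] at h1
      exact h1
    have h3 : u ^ (s * (j * l)) = 1 := Units.ext (by
      push_cast [Units.val_pow_eq_pow_val] at h2 ⊢
      exact h2)
    exact hu (isOfFinOrder_iff_pow_eq_one.mpr ⟨s * (j * l), by positivity, h3⟩)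
  -- `y j ≡ l` mod `Q`
  have hyQ : ∀ j, Ideal.Quotient.mk Q (y j) = (l : 𝓞 F ⧸ Q) := by
    intro j
    rw [hydef]
    simp only [map_sum, map_pow, haQ, one_pow]
    simp
  -- key step: `y j = l * ε` with `ε` a unit
  have key : ∀ j, 1 ≤ j → ∃ ε : 𝓞 F, IsUnit ε ∧ y j = (l : 𝓞 F) * ε := by
    intro j hj
    have hmem : y j - (l : 𝓞 F) ∈ Q := by
      rw [← Ideal.Quotient.eq_zero_iff_mem, map_sub, hyQ j, map_natCast, sub_self]
    have hmem2 : y j - (l : 𝓞 F) ∈ Ideal.span {(l : 𝓞 F) ^ 2} :=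
      Ideal.mul_le_left hmem
    obtain ⟨z, hz⟩ := Ideal.mem_span_singleton'.mp hmem2
    set ε : 𝓞 F := 1 + z * (l : 𝓞 F) with hεdef
    have hyε : y j = (l : 𝓞 F) * ε := by
      calc y j = (y j - (l : 𝓞 F)) + (l : 𝓞 F) := by ring
        _ = z * (l : 𝓞 F) ^ 2 + (l : 𝓞 F) := by rw [hz]
        _ = (l : 𝓞 F) * (1 + z * (l : 𝓞 F)) := by ring
        _ = (l : 𝓞 F) * ε := by rw [hεdef]
    refine ⟨ε, ?_, hyε⟩
    by_contra hεu
    have hεne : ε ≠ 0 := by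
      intro h0
      exact hyne j hj (by rw [hyε, h0, mul_zero])
    have hsne : Ideal.span {ε} ≠ ⊤ := by simpa [Ideal.span_singleton_eq_top] using hεu
    obtain ⟨M, hMmax, hMle⟩ := Ideal.exists_le_maximal _ hsne
    have hεM : ε ∈ M := hMle (Ideal.subset_span rfl)
    have hyM : y j ∈ M := by rw [hyε]; exact Ideal.mul_mem_left _ _ hεM
    have hlM : (l : 𝓞 F) ∉ M := by
      intro hlM
      have : (1 : 𝓞 F) ∈ M := by
        have : ε - z * (l : 𝓞 F) ∈ M := Ideal.sub_mem _ hεM (Ideal.mul_mem_left _ _ hlM)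
        simpa [hεdef] using this
      exact hMmax.ne_top (Ideal.eq_top_of_isUnit_mem _ this isUnit_one)
    have hMbot : M ≠ ⊥ := by
      intro hb
      rw [hb, Ideal.mem_bot] at hεM
      exact hεne hεM
    set v : HeightOneSpectrum (𝓞 F) := ⟨M, hMmax.isPrime, hMbot⟩ with hvdef
    haveI : Fintype (𝓞 F ⧸ M) := @Fintype.ofFinite _ (Ideal.finiteQuotientOfFreeOfNeBot M hMbot)
    haveI : Finite ((𝓞 F ⧸ M)ˣ) := Finite.of_injective (fun x => (x : 𝓞 F ⧸ M)) (fun _ _ h => Units.ext h)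
    set Ub : ((𝓞 F ⧸ M)ˣ) := Units.map (Ideal.Quotient.mk M).toMonoidHom u with hUbdef
    set Wb : ((𝓞 F ⧸ M)ˣ) := Units.map (Ideal.Quotient.mk M).toMonoidHom (u ^ s) with hWbdef
    have hWbUb : Wb = Ub ^ s := by rw [hWbdef, hUbdef, map_pow]
    set d : ℕ := orderOf Ub with hddef
    set r : ℕ := orderOf Wb with hrdef
    have hd0 : d ≠ 0 := (orderOf_pos Ub).ne'
    have hrd : r = d / Nat.gcd d s := by rw [hrdef, hWbUb, orderOf_pow]
    -- `Wb ^ (j * l) = 1`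
    have haM : a ^ (j * l) - 1 ∈ M := by
      rw [← hident j]
      exact Ideal.mul_mem_right _ _ hyM
    have hWba : ((Wb : (𝓞 F ⧸ M)ˣ) : 𝓞 F ⧸ M) = Ideal.Quotient.mk M a := by
      rw [hWbdef, hadef]
      simp [Units.coe_map, Units.val_pow_eq_pow_val]
    have hWbjl : Wb ^ (j * l) = 1 := by
      apply Units.ext
      have h1 : Ideal.Quotient.mk M (a ^ (j * l)) = 1 := by
        rw [← sub_eq_zero, ← map_one (Ideal.Quotient.mk M), ← map_sub,
          Ideal.Quotient.eq_zero_iff_mem]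
        exact haM
      rw [Units.val_pow_eq_pow_val, hWba, ← map_pow, h1, Units.val_one]
    have hrjl : r ∣ j * l := orderOf_dvd_of_pow_eq_one hWbjl
    by_cases hlr : l ∣ r
    · -- then `v` is a solution, so `v ∈ T`, so `Wb = 1`, contradiction
      have hlm : l ^ m ∣ d :=
        pow_dvd_of_prime_dvd_orderOf_pow hp hm hd0 hs0 (dvd_mul_left _ _) (hrd ▸ hlr)
      have hvS : v ∈ T := by
        rw [hTdef, Set.Finite.mem_toFinset]
        exact ⟨hlM, hlm⟩
      have hQM : Q ≤ M := by
        refine le_trans Ideal.mul_le_right ?_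
        exact le_trans (Ideal.prod_le_inf.trans (Finset.inf_le hvS)) (le_refl _)
      have haM1 : Ideal.Quotient.mk M a = 1 := by
        have h1 : a - 1 ∈ Q := by
          rw [← Ideal.Quotient.eq_zero_iff_mem, map_sub, haQ, map_one, sub_self]
        have h2 : a - 1 ∈ M := hQM h1
        rw [← sub_eq_zero, ← map_one (Ideal.Quotient.mk M), ← map_sub,
          Ideal.Quotient.eq_zero_iff_mem]
        exact h2
      have hWb1 : Wb = 1 := by
        apply Units.ext
        rw [hWba, haM1, Units.val_one]
      have : r = 1 := by rw [hrdef, hWb1, orderOf_one]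
      rw [this] at hlr
      exact absurd (Nat.le_of_dvd one_pos hlr) (by omega)
    · -- then `r ∣ j`, so `y j ≡ l` mod `M`, contradicting `y j ∈ M`, `l ∉ M`
      have hcop : Nat.Coprime r l := Nat.Coprime.symm (hp.coprime_iff_not_dvd.mpr hlr)
      have hrj : r ∣ j := hcop.dvd_of_dvd_mul_right hrjl
      have hWbj : Wb ^ j = 1 := orderOf_dvd_iff_pow_eq_one.mp (hrdef ▸ hrj)
      have haj1 : Ideal.Quotient.mk M (a ^ j) = 1 := by
        have := congrArg (fun x : ((𝓞 F ⧸ M)ˣ) => (x : (𝓞 F ⧸ M))) hWbj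
        simpa [hWbdef, hadef, Units.val_pow_eq_pow_val] using this
      have hyl : Ideal.Quotient.mk M (y j) = (l : 𝓞 F ⧸ M) := by
        rw [hydef]
        simp only [map_sum, map_pow, haj1, one_pow]
        simp
      have : (l : 𝓞 F ⧸ M) = 0 := by
        rw [← hyl, Ideal.Quotient.eq_zero_iff_mem]
        exact hyM
      have : (l : 𝓞 F) ∈ M := by
        rwa [← map_natCast (Ideal.Quotient.mk M), Ideal.Quotient.eq_zero_iff_mem] at this
      exact hlM this
  -- Archimedean contradiction
  set W : F := (a : F) with hWdef
  have hWint : IsIntegral ℤ W := a.isIntegral_coe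
  have hWpow : ∀ n : ℕ, 0 < n → W ^ n ≠ 1 := by
    intro n hn h1
    have h2 : a ^ n = 1 := by
      have h3 : ((a ^ n : 𝓞 F) : F) = ((1 : 𝓞 F) : F) := by push_cast; simpa [hWdef] using h1
      exact_mod_cast h3
    have h3 : u ^ (s * n) = 1 := by
      apply Units.ext
      rw [Units.val_pow_eq_pow_val, Units.val_one, pow_mul]
      rw [hadef] at h2
      exact h2
    exact hu (isOfFinOrder_iff_pow_eq_one.mpr ⟨s * n, by positivity, h3⟩)
  have hunitnorm : ∀ x : 𝓞 F, IsUnit x → |Algebra.norm ℚ (x : F)| = 1 := by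
    intro x hx
    have h := NumberField.isUnit_iff_norm.mp hx
    rwa [RingOfIntegers.coe_norm] at h
  have hWnorm : |Algebra.norm ℚ W| = 1 := by
    apply hunitnorm
    rw [hadef]
    exact u.isUnit.pow s
  -- there is a place where `W` is large
  have hexists : ∃ ω₀ : NumberField.InfinitePlace F, 1 < ω₀ W := by
    by_contra hno
    push_neg at hno
    have hone : ∀ ω : NumberField.InfinitePlace F, ω W = 1 := by
      have hprod : ∏ ω : NumberField.InfinitePlace F, (ω W) ^ ω.mult = 1 := by
        rw [NumberField.InfinitePlace.prod_eq_abs_norm]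
        exact_mod_cast congrArg (fun q : ℚ => (q : ℝ)) hWnorm
      by_contra hone
      push_neg at hone
      obtain ⟨ω₁, hω₁⟩ := hone
      have hlt : ω₁ W < 1 := lt_of_le_of_ne (hno ω₁) hω₁
      have h1 : (ω₁ W) ^ ω₁.mult < 1 := by
        apply pow_lt_one₀ (apply_nonneg _ _) hlt
        have := NumberField.InfinitePlace.mult_pos (w := ω₁); omega
      have h2 : ∏ ω ∈ Finset.univ.erase ω₁, (ω W) ^ ω.mult ≤ 1 := by
        apply Finset.prod_le_one
        · intro ω _; positivity
        · intro ω _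
          exact pow_le_one₀ (apply_nonneg _ _) (hno ω)
      have h3 : ∏ ω : NumberField.InfinitePlace F, (ω W) ^ ω.mult < 1 := by
        rw [← Finset.mul_prod_erase Finset.univ _ (Finset.mem_univ ω₁)]
        have h0 : (0:ℝ) ≤ (ω₁ W) ^ ω₁.mult := by positivity
        calc (ω₁ W) ^ ω₁.mult * ∏ ω ∈ Finset.univ.erase ω₁, (ω W) ^ ω.mult
            ≤ (ω₁ W) ^ ω₁.mult := mul_le_of_le_one_right h0 h2
          _ < 1 := h1
      rw [hprod] at h3
      exact absurd h3 (lt_irrefl 1)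
    have hall : ∀ φ : F →+* ℂ, ‖φ W‖ = 1 := by
      intro φ
      rw [← NumberField.InfinitePlace.apply φ W]
      exact hone _
    obtain ⟨n, hn, hWn⟩ := NumberField.Embeddings.pow_eq_one_of_norm_eq_one F ℂ hWint hall
    exact hWpow n hn hWn
  obtain ⟨ω₀, hω₀⟩ := hexists
  -- good exponents for unit-circle places
  set ι := {ω : NumberField.InfinitePlace F // ω W = 1} with hιdef
  set z : ι → ℂ := fun ω => (ω.1.embedding W) ^ l with hzdef
  have hz1 : ∀ i : ι, ‖z i‖ = 1 := by
    intro i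
    rw [hzdef]
    simp only [norm_pow]
    rw [NumberField.InfinitePlace.norm_embedding_eq, i.2, one_pow]
  have hz2 : ∀ i : ι, ∀ n : ℕ, 0 < n → (z i) ^ n ≠ 1 := by
    intro i n hn h1
    apply hWpow (l * n) (by positivity)
    apply i.1.embedding.injective
    rw [map_pow, map_one]
    rw [hzdef] at h1
    simp only at h1
    rwa [← pow_mul] at h1
  obtain ⟨c, hc0, hgood⟩ := exists_good_exponent z hz1 hz2
  -- constants
  set C : ℝ := ((|Algebra.norm ℚ (((l : 𝓞 F) : F))| : ℚ) : ℝ) with hCdef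
  set b : ℝ := min (c / 2) (1 / 2) with hbdef
  have hb0 : 0 < b := lt_min (by linarith) (by norm_num)
  have hb1 : b ≤ 1 := le_trans (min_le_right _ _) (by norm_num)
  set nP : ℕ := Fintype.card (NumberField.InfinitePlace F) with hnPdef
  set κ : ℝ := (b ^ 2) ^ nP with hκdef
  have hκ0 : 0 < κ := by positivity
  -- eventual largeness conditions
  have hev1 : ∀ᶠ j : ℕ in Filter.atTop, C < (ω₀ W) ^ j / 4 * κ := by
    have h1 : Filter.Tendsto (fun j : ℕ => (ω₀ W) ^ j / 4 * κ) Filter.atTop Filter.atTop :=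
      ((tendsto_pow_atTop_atTop_of_one_lt hω₀).atTop_div_const (by norm_num)).atTop_mul_const hκ0
    exact h1.eventually_gt_atTop C
  have hev2 : ∀ᶠ j : ℕ in Filter.atTop,
      ∀ ω ∈ Finset.univ.filter (fun ω : NumberField.InfinitePlace F => 1 < ω W),
        (4 : ℝ) ≤ (ω W) ^ j := by
    apply (Filter.eventually_all_finset _).mpr
    intro ω hω
    rw [Finset.mem_filter] at hω
    exact (tendsto_pow_atTop_atTop_of_one_lt hω.2).eventually_ge_atTop 4
  have hev3 : ∀ᶠ j : ℕ in Filter.atTop,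
      ∀ ω ∈ Finset.univ.filter (fun ω : NumberField.InfinitePlace F => ω W < 1),
        (ω W) ^ j ≤ 1 / (2 * l) := by
    apply (Filter.eventually_all_finset _).mpr
    intro ω hω
    rw [Finset.mem_filter] at hω
    have h0 : (0:ℝ) < 1 / (2 * l) := by positivity
    exact ((tendsto_pow_atTop_nhds_zero_of_lt_one
      (apply_nonneg _ _) hω.2).eventually_lt_const h0).mono
      (fun x hx => hx.le)
  obtain ⟨N₀, hN₀⟩ := Filter.eventually_atTop.mp (hev1.and (hev2.and hev3))
  obtain ⟨j, hjN, hj0, hjgood⟩ := hgood N₀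
  obtain ⟨h1, h2, h3⟩ := hN₀ j hjN
  obtain ⟨ε, hεu, hyε⟩ := key j hj0
  set Y : F := ((y j : 𝓞 F) : F) with hYdef
  have hYnorm : ∏ ω : NumberField.InfinitePlace F, (ω Y) ^ ω.mult = C := by
    rw [NumberField.InfinitePlace.prod_eq_abs_norm]
    have hYsplit : Y = ((l : 𝓞 F) : F) * ((ε : 𝓞 F) : F) := by
      rw [hYdef, hyε]; push_cast; ring
    rw [hYsplit, map_mul, abs_mul, hunitnorm ε hεu, mul_one, hCdef]
  have hYident : Y * (W ^ j - 1) = W ^ (j * l) - 1 := by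
    have h4 := congrArg (fun x : 𝓞 F => (x : F)) (hident j)
    push_cast at h4
    rw [hYdef, hWdef]
    exact_mod_cast h4
  have hYsum : Y = ∑ i ∈ Finset.range l, (W ^ j) ^ i := by
    rw [hYdef, hydef]
    push_cast
    rfl
  -- absolute value helpers
  have habs1 : ∀ (ω : NumberField.InfinitePlace F) (x : F), ω (x - 1) ≤ ω x + 1 := by
    intro ω x
    have h := ω.1.add_le x (-1)
    have hn : ω.1 (-1) = 1 := by rw [ω.1.map_neg, ω.1.map_one]
    calc ω (x - 1) = ω.1 (x + (-1)) := by rw [sub_eq_add_neg]; rfl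
      _ ≤ ω.1 x + ω.1 (-1) := h
      _ = ω x + 1 := by rw [hn]; rfl
  have habs2 : ∀ (ω : NumberField.InfinitePlace F) (x : F), ω x - 1 ≤ ω (x - 1) := by
    intro ω x
    have h := ω.1.le_sub x 1
    have h1 : ω.1 1 = 1 := ω.1.map_one
    calc ω x - 1 = ω.1 x - ω.1 1 := by rw [h1]; rfl
      _ ≤ ω (x - 1) := h
  have habs3 : ∀ (ω : NumberField.InfinitePlace F) (x : F), ω (1 - x) = ω (x - 1) := by
    intro ω x
    exact ω.1.map_sub 1 x
  -- per-place lower bounds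
  have hgt : ∀ ω : NumberField.InfinitePlace F, 1 < ω W → (4:ℝ) ≤ (ω W) ^ j →
      (ω W) ^ j / 4 ≤ ω Y := by
    intro ω hω h4
    set X : ℝ := (ω W) ^ j with hXdef
    have hX1 : (1:ℝ) ≤ X := by linarith
    have hid : ω Y * ω (W ^ j - 1) = ω (W ^ (j * l) - 1) := by
      rw [← map_mul, hYident]
    have hup : ω (W ^ j - 1) ≤ X + 1 := by
      have h5 := habs1 ω (W ^ j)
      rw [map_pow] at h5
      exact h5
    
    have hlo : X ^ 3 - 1 ≤ ω (W ^ (j * l) - 1) := by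
      have h5 : ω (W ^ (j * l)) - 1 ≤ ω (W ^ (j * l) - 1) := habs2 ω _
      have h6 : ω (W ^ (j * l)) = X ^ l := by rw [map_pow, hXdef, ← pow_mul, mul_comm j l, pow_mul]
      have h7 : X ^ 3 ≤ X ^ l := pow_le_pow_right₀ hX1 hl3
      rw [h6] at h5
      linarith
    have hY0 : 0 ≤ ω Y := apply_nonneg _ _
    have h8 : X ^ 3 - 1 ≤ ω Y * (X + 1) := by
      have h9 : ω Y * ω (W ^ j - 1) ≤ ω Y * (X + 1) := by
        apply mul_le_mul_of_nonneg_left hup hY0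
      linarith [hid ▸ hlo]
    nlinarith [h8, h4, hY0, sq_nonneg X, sq_nonneg (X - 4),
      mul_nonneg (sub_nonneg.mpr h4) (sq_nonneg X),
      mul_nonneg (sub_nonneg.mpr h4) (sub_nonneg.mpr h4)]
  have heq1 : ∀ ω : NumberField.InfinitePlace F, ∀ h : ω W = 1, c / 2 ≤ ω Y := by
    intro ω h
    have hgd := hjgood ⟨ω, h⟩
    have hzj : (z ⟨ω, h⟩) ^ j - 1 = ω.embedding (W ^ (j * l) - 1) := by
      rw [hzdef]
      simp only [map_sub, map_one, map_pow]
      rw [← pow_mul, mul_comm l j]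
    have hnorm : ω (W ^ (j * l) - 1) = ‖(z ⟨ω, h⟩) ^ j - 1‖ := by
      rw [hzj, NumberField.InfinitePlace.norm_embedding_eq]
    have hid : ω Y * ω (W ^ j - 1) = ω (W ^ (j * l) - 1) := by
      rw [← map_mul, hYident]
    have hup : ω (W ^ j - 1) ≤ 2 := by
      have h5 := habs1 ω (W ^ j)
      rw [map_pow, h, one_pow] at h5
      linarith
    have hY0 : 0 ≤ ω Y := apply_nonneg _ _
    have hc' : c ≤ ω Y * ω (W ^ j - 1) := by rw [hid, hnorm]; exact hgd
    have hc2 : c ≤ ω Y * 2 := le_trans hc' (mul_le_mul_of_nonneg_left hup hY0)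
    linarith
  have hlt1 : ∀ ω : NumberField.InfinitePlace F, ω W < 1 → (ω W) ^ j ≤ 1 / (2 * l) →
      (1:ℝ) / 2 ≤ ω Y := by
    intro ω hω hsm
    have hW0 : 0 ≤ ω W := apply_nonneg _ _
    have hsplit : Y - 1 = ∑ i ∈ Finset.Ico 1 l, (W ^ j) ^ i := by
      have h5 := Finset.sum_range_add_sum_Ico (fun i => (W ^ j) ^ i) (by omega : 1 ≤ l)
      rw [hYsum, ← h5]
      simp
    have hbd : ω (Y - 1) ≤ (l : ℝ) * (ω W) ^ j := by
      calc ω (Y - 1) ≤ ∑ i ∈ Finset.Ico 1 l, ω ((W ^ j) ^ i) := by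
            rw [hsplit]; exact ω.1.sum_le _ _
        _ ≤ ∑ i ∈ Finset.Ico 1 l, (ω W) ^ j := by
            apply Finset.sum_le_sum
            intro i hi
            rw [Finset.mem_Ico] at hi
            rw [map_pow, map_pow]
            have hbase : (ω W) ^ j ≤ 1 := pow_le_one₀ hW0 hω.le
            have hbase0 : 0 ≤ (ω W) ^ j := by positivity
            calc ((ω W) ^ j) ^ i ≤ ((ω W) ^ j) ^ 1 :=
                  pow_le_pow_of_le_one hbase0 hbase hi.1
              _ = (ω W) ^ j := pow_one _
        _ = ((l - 1 : ℕ) : ℝ) * (ω W) ^ j := by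
            rw [Finset.sum_const, Nat.card_Ico, nsmul_eq_mul]
        _ ≤ (l : ℝ) * (ω W) ^ j := by
            apply mul_le_mul_of_nonneg_right _ (by positivity)
            exact_mod_cast Nat.sub_le l 1
    have hhalf : ω (Y - 1) ≤ 1 / 2 := by
      have h5 : (l : ℝ) * (ω W) ^ j ≤ (l : ℝ) * (1 / (2 * l)) := by
        apply mul_le_mul_of_nonneg_left hsm (by positivity)
      have hl0 : (0:ℝ) < l := by positivity
      have h6 : (l : ℝ) * (1 / (2 * l)) = 1 / 2 := by
        rw [mul_one_div, div_eq_div_iff (by positivity) (by norm_num : (2:ℝ) ≠ 0)]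
        ring
      linarith
    have h7 : ω Y - 1 ≤ ω (Y - 1) := habs2 ω Y
    have h7b : (1:ℝ) - ω Y ≤ ω (Y - 1) := by
      have := habs2 ω (1 - Y)
      have h9 : ω (1 - Y) = ω (Y - 1) := habs3 ω Y
      have h10 : ω 1 - ω Y ≤ ω (1 - Y) := by
        have h11 := ω.1.le_sub 1 Y
        have h12 : ω.1 1 = 1 := ω.1.map_one
        calc ω 1 - ω Y = ω.1 1 - ω.1 Y := rfl
          _ ≤ ω (1 - Y) := h11
      rw [map_one] at h10
      linarith [h9 ▸ h10]
    linarith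
  -- assemble the contradiction
  have hrest : ∀ ω ∈ Finset.univ.erase ω₀, b ^ 2 ≤ (ω Y) ^ ω.mult := by
    intro ω _
    have hY0 : 0 ≤ ω Y := apply_nonneg _ _
    have hbω : b ≤ ω Y := by
      rcases lt_trichotomy (ω W) 1 with h | h | h
      · have h5 := hlt1 ω h (h3 ω (Finset.mem_filter.mpr ⟨Finset.mem_univ _, h⟩))
        calc b ≤ 1 / 2 := min_le_right _ _
          _ ≤ ω Y := h5
      · calc b ≤ c / 2 := min_le_left _ _
          _ ≤ ω Y := heq1 ω h
      · have h4 := h2 ω (Finset.mem_filter.mpr ⟨Finset.mem_univ _, h⟩)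
        have h5 := hgt ω h h4
        calc b ≤ 1 / 2 := min_le_right _ _
          _ ≤ (ω W) ^ j / 4 := by linarith
          _ ≤ ω Y := h5
    have hm2 : ω.mult ≤ 2 := by
      have h12 : ω.mult = 1 ∨ ω.mult = 2 := by
        unfold NumberField.InfinitePlace.mult; split <;> simp
      omega
    calc b ^ 2 ≤ b ^ ω.mult := pow_le_pow_of_le_one hb0.le hb1 hm2
      _ ≤ (ω Y) ^ ω.mult := pow_le_pow_left₀ hb0.le hbω _
  have hmult0 : ω₀.mult ≠ 0 := by
    have := NumberField.InfinitePlace.mult_pos (w := ω₀); omega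
  have h4 : (4:ℝ) ≤ (ω₀ W) ^ j := h2 ω₀ (Finset.mem_filter.mpr ⟨Finset.mem_univ _, hω₀⟩)
  have hA : (ω₀ W) ^ j / 4 ≤ (ω₀ Y) ^ ω₀.mult := by
    have hY0 := hgt ω₀ hω₀ h4
    have hY1 : 1 ≤ ω₀ Y := by linarith
    calc (ω₀ W) ^ j / 4 ≤ ω₀ Y := hY0
      _ ≤ (ω₀ Y) ^ ω₀.mult := le_self_pow₀ hY1 hmult0
  have hB : κ ≤ ∏ ω ∈ Finset.univ.erase ω₀, (ω Y) ^ ω.mult := by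
    have hb2 : (0:ℝ) ≤ b ^ 2 := by positivity
    have hb21 : b ^ 2 ≤ 1 := by nlinarith
    calc κ = (b ^ 2) ^ nP := hκdef
      _ ≤ (b ^ 2) ^ (Finset.univ.erase ω₀).card := by
          apply pow_le_pow_of_le_one hb2 hb21
          calc (Finset.univ.erase ω₀).card ≤ Finset.univ.card := Finset.card_erase_le ..
            _ = nP := by rw [hnPdef, Finset.card_univ]
      _ = ∏ _ω ∈ Finset.univ.erase ω₀, b ^ 2 := by rw [Finset.prod_const]
      _ ≤ ∏ ω ∈ Finset.univ.erase ω₀, (ω Y) ^ ω.mult :=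
          Finset.prod_le_prod (fun ω _ => hb2) hrest
  have hfinal : (ω₀ W) ^ j / 4 * κ ≤ C := by
    rw [← hYnorm, ← Finset.mul_prod_erase Finset.univ _ (Finset.mem_univ ω₀)]
    apply mul_le_mul hA hB hκ0.le (by positivity)
  linarith
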